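/- arXiv:1605.03881 — 2 statements merged into one kernel-verified Lean document; each statement's English description precedes it below -/
import Mathlib

section
/- The dual functional h : ℝ^n → ℝ is convex and continuously differentiable, and its gradient is given by ∇h(W) = −BΦ(W) + CW + G for every W ∈ ℝ^n. -/
open scoped RealInnerProductSpace

set_option maxHeartbeats 1000000

lemma aux_pos (c d : ℝ) (hd : 0 ≤ d)
    (H : ∀ t : ℝ, 0 < t → t ≤ 1 → 0 ≤ t * c + t ^ 2 / 2 * d) : 0 ≤ c := by
  by_contra hc
  push_neg at hc
  set t := min 1 (-c / (d + 1)) with ht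
  have hd1 : (0:ℝ) < d + 1 := by linarith
  have h1 : 0 < -c / (d + 1) := div_pos (by linarith) hd1
  have ht0 : 0 < t := lt_min one_pos h1
  have ht1 : t ≤ 1 := min_le_left _ _
  have h2 : t ≤ -c / (d + 1) := min_le_right _ _
  have h3 : t * (d + 1) ≤ -c := by
    rw [← div_mul_cancel₀ (-c) (ne_of_gt hd1)]
    exact mul_le_mul_of_nonneg_right h2 hd1.le
  have H' := H t ht0 ht1
  nlinarith [mul_le_mul_of_nonneg_left h3 ht0.le, sq_nonneg t, mul_pos ht0 ht0]

lemma aux_quad_expand {k : ℕ} (T : EuclideanSpace ℝ (Fin k) →L[ℝ] EuclideanSpace ℝ (Fin k))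
    (hT : ∀ x y : EuclideanSpace ℝ (Fin k), ⟪T x, y⟫ = ⟪x, T y⟫)
    (x y : EuclideanSpace ℝ (Fin k)) :
    ⟪T (x + y), x + y⟫ = ⟪T x, x⟫ + 2 * ⟪T x, y⟫ + ⟪T y, y⟫ := by
  have h1 : ⟪T y, x⟫ = ⟪T x, y⟫ := by rw [hT y x, real_inner_comm]
  simp only [map_add, inner_add_left, inner_add_right]
  rw [h1]; ring

lemma aux_coercive {m : ℕ} (hm : 0 < m)
    (A : EuclideanSpace ℝ (Fin m) →L[ℝ] EuclideanSpace ℝ (Fin m))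
    (hApos : ∀ x : EuclideanSpace ℝ (Fin m), x ≠ 0 → 0 < ⟪A x, x⟫) :
    ∃ α : ℝ, 0 < α ∧ ∀ x : EuclideanSpace ℝ (Fin m), α * ‖x‖ ^ 2 ≤ ⟪A x, x⟫ := by
  have hcs : IsCompact (Metric.sphere (0 : EuclideanSpace ℝ (Fin m)) 1) := isCompact_sphere 0 1
  have hne : (Metric.sphere (0 : EuclideanSpace ℝ (Fin m)) 1).Nonempty := by
    refine ⟨EuclideanSpace.single ⟨0, hm⟩ (1 : ℝ), ?_⟩
    simp [EuclideanSpace.norm_single]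
  have hcont : Continuous fun x : EuclideanSpace ℝ (Fin m) => ⟪A x, x⟫ :=
    (A.continuous.inner continuous_id)
  obtain ⟨x₀, hx₀, hmin⟩ := hcs.exists_isMinOn hne hcont.continuousOn
  have hx₀1 : ‖x₀‖ = 1 := by simpa using hx₀
  have hx₀ne : x₀ ≠ 0 := by intro h; rw [h] at hx₀1; simp at hx₀1
  refine ⟨⟪A x₀, x₀⟫, hApos x₀ hx₀ne, fun x => ?_⟩
  rcases eq_or_ne x 0 with rfl | hx
  · simp
  · have hxn : 0 < ‖x‖ := norm_pos_iff.mpr hx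
    set u := ‖x‖⁻¹ • x with hu
    have hus : u ∈ Metric.sphere (0 : EuclideanSpace ℝ (Fin m)) 1 := by
      simp [hu, norm_smul, abs_of_pos (inv_pos.mpr hxn), inv_mul_cancel₀ hxn.ne']
    have hmin' : ⟪A x₀, x₀⟫ ≤ ⟪A u, u⟫ := hmin hus
    have he : ⟪A u, u⟫ = ‖x‖⁻¹ * ‖x‖⁻¹ * ⟪A x, x⟫ := by
      rw [hu, map_smul, real_inner_smul_left, real_inner_smul_right]; ring
    have : ⟪A x₀, x₀⟫ ≤ ‖x‖⁻¹ * ‖x‖⁻¹ * ⟪A x, x⟫ := he ▸ hmin'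
    have h2 := mul_le_mul_of_nonneg_left this (le_of_lt (mul_pos hxn hxn))
    calc ⟪A x₀, x₀⟫ * ‖x‖ ^ 2 = ‖x‖ * ‖x‖ * ⟪A x₀, x₀⟫ := by ring
      _ ≤ ‖x‖ * ‖x‖ * (‖x‖⁻¹ * ‖x‖⁻¹ * ⟪A x, x⟫) := h2
      _ = ⟪A x, x⟫ := by field_simp

/-- The Lagrangian `L(V, W) = ½⟨AV, V⟩ − ⟨F, V⟩ + ⟨BV − G, W⟩ − ½⟨CW, W⟩`. -/
noncomputable def Lag {m n : ℕ}
    (A : EuclideanSpace ℝ (Fin m) →L[ℝ] EuclideanSpace ℝ (Fin m))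
    (B : EuclideanSpace ℝ (Fin m) →L[ℝ] EuclideanSpace ℝ (Fin n))
    (C : EuclideanSpace ℝ (Fin n) →L[ℝ] EuclideanSpace ℝ (Fin n))
    (F : EuclideanSpace ℝ (Fin m)) (G : EuclideanSpace ℝ (Fin n))
    (V : EuclideanSpace ℝ (Fin m)) (W : EuclideanSpace ℝ (Fin n)) : ℝ :=
  (1 / 2 : ℝ) * ⟪A V, V⟫ - ⟪F, V⟫ + ⟪B V - G, W⟫ - (1 / 2 : ℝ) * ⟪C W, W⟫

/-- The dual functional `h(W) = −L(Φ(W), W)` is convex and continuously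
differentiable with gradient `∇h(W) = −BΦ(W) + CW + G`. -/
theorem stmt_3 {m n : ℕ} (hm : 0 < m) (hn : 0 < n)
    (A : EuclideanSpace ℝ (Fin m) →L[ℝ] EuclideanSpace ℝ (Fin m))
    (hAsym : ∀ x y : EuclideanSpace ℝ (Fin m), ⟪A x, y⟫ = ⟪x, A y⟫)
    (hApos : ∀ x : EuclideanSpace ℝ (Fin m), x ≠ 0 → 0 < ⟪A x, x⟫)
    (B : EuclideanSpace ℝ (Fin m) →L[ℝ] EuclideanSpace ℝ (Fin n))
    (C : EuclideanSpace ℝ (Fin n) →L[ℝ] EuclideanSpace ℝ (Fin n))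
    (hCsym : ∀ x y : EuclideanSpace ℝ (Fin n), ⟪C x, y⟫ = ⟪x, C y⟫)
    (hCpos : ∀ x : EuclideanSpace ℝ (Fin n), x ≠ 0 → 0 < ⟪C x, x⟫)
    (F : EuclideanSpace ℝ (Fin m)) (G : EuclideanSpace ℝ (Fin n))
    (K : Set (EuclideanSpace ℝ (Fin m)))
    (hKne : K.Nonempty) (hKcl : IsClosed K) (hKco : Convex ℝ K)
    -- `Phi W` is the minimizer over `K` of `V ↦ ½⟨AV, V⟩ − ⟨F − BᵀW, V⟩`
    (Phi : EuclideanSpace ℝ (Fin n) → EuclideanSpace ℝ (Fin m))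
    (hPhi : ∀ W : EuclideanSpace ℝ (Fin n), Phi W ∈ K ∧ ∀ V ∈ K,
      (1 / 2 : ℝ) * ⟪A (Phi W), Phi W⟫ - ⟪F - (ContinuousLinearMap.adjoint B) W, Phi W⟫ ≤
        (1 / 2 : ℝ) * ⟪A V, V⟫ - ⟪F - (ContinuousLinearMap.adjoint B) W, V⟫)
    -- the dual functional `h(W) = −L(Φ(W), W)`
    (h : EuclideanSpace ℝ (Fin n) → ℝ)
    (hdual : ∀ W : EuclideanSpace ℝ (Fin n), h W = -Lag A B C F G (Phi W) W) :
    ConvexOn ℝ Set.univ h ∧ ContDiff ℝ 1 h ∧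
      ∀ W : EuclideanSpace ℝ (Fin n), gradient h W = -B (Phi W) + C W + G := by
  classical
  obtain ⟨α, hα, hcoA⟩ := aux_coercive hm A hApos
  have hC0 : ∀ x, 0 ≤ ⟪C x, x⟫ := by
    intro x; rcases eq_or_ne x 0 with rfl | hx
    · simp
    · exact (hCpos x hx).le
  have hA0 : ∀ x, 0 ≤ ⟪A x, x⟫ := fun x => le_trans (by positivity) (hcoA x)
  have hadj : ∀ (W : EuclideanSpace ℝ (Fin n)) (V : EuclideanSpace ℝ (Fin m)),
      ⟪F - (ContinuousLinearMap.adjoint B) W, V⟫ = ⟪F, V⟫ - ⟪W, B V⟫ := by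
    intro W V; rw [inner_sub_left, ContinuousLinearMap.adjoint_inner_left]
  -- variational inequality
  have hVI : ∀ W, ∀ V ∈ K,
      0 ≤ ⟪A (Phi W), V - Phi W⟫ - ⟪F, V - Phi W⟫ + ⟪W, B (V - Phi W)⟫ := by
    intro W V hV
    set P := Phi W with hP
    set D := V - P with hD
    refine aux_pos _ ⟪A D, D⟫ (hA0 D) (fun t ht0 ht1 => ?_)
    have hmem : P + t • D ∈ K := by
      have h2 : (1 - t) • P + t • V ∈ K :=
        hKco (hPhi W).1 hV (by linarith) ht0.le (by ring)
      have h3 : (1 - t) • P + t • V = P + t • D := by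
        rw [hD]; rw [smul_sub, sub_smul, one_smul]; abel
      rwa [h3] at h2
    have H := (hPhi W).2 _ hmem
    rw [← hP] at H
    rw [hadj, hadj] at H
    have e1 : ⟪A (P + t • D), P + t • D⟫
        = ⟪A P, P⟫ + 2 * (t * ⟪A P, D⟫) + t * (t * ⟪A D, D⟫) := by
      rw [aux_quad_expand A hAsym P (t • D), real_inner_smul_right, map_smul,
        real_inner_smul_left, real_inner_smul_right]
    have e2 : ⟪F, P + t • D⟫ = ⟪F, P⟫ + t * ⟪F, D⟫ := by
      rw [inner_add_right, real_inner_smul_right]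
    have e3 : ⟪W, B (P + t • D)⟫ = ⟪W, B P⟫ + t * ⟪W, B D⟫ := by
      rw [map_add, map_smul, inner_add_right, real_inner_smul_right]
    rw [e1, e2, e3] at H
    nlinarith [H]
  -- Lipschitz estimate for Phi
  have hLip : ∀ W W', ‖Phi W' - Phi W‖ ≤ ‖B‖ / α * ‖W' - W‖ := by
    intro W W'
    have i1 := hVI W (Phi W') (hPhi W').1
    have i2 := hVI W' (Phi W) (hPhi W).1
    have hneg : Phi W - Phi W' = -(Phi W' - Phi W) := by abel
    rw [hneg, inner_neg_right, inner_neg_right, map_neg, inner_neg_right] at i2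
    have hAu : ⟪A (Phi W' - Phi W), Phi W' - Phi W⟫
        = ⟪A (Phi W'), Phi W' - Phi W⟫ - ⟪A (Phi W), Phi W' - Phi W⟫ := by
      rw [map_sub, inner_sub_left]
    have hWW : ⟪W - W', B (Phi W' - Phi W)⟫
        = ⟪W, B (Phi W' - Phi W)⟫ - ⟪W', B (Phi W' - Phi W)⟫ := inner_sub_left _ _ _
    have h1 : ⟪A (Phi W' - Phi W), Phi W' - Phi W⟫ ≤ ⟪W - W', B (Phi W' - Phi W)⟫ := by
      rw [hAu, hWW]; linarith
    have h2 : ⟪W - W', B (Phi W' - Phi W)⟫ ≤ ‖W - W'‖ * (‖B‖ * ‖Phi W' - Phi W‖) :=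
      le_trans (real_inner_le_norm _ _)
        (mul_le_mul_of_nonneg_left (B.le_opNorm _) (norm_nonneg _))
    have h3 := hcoA (Phi W' - Phi W)
    have hnormWW : ‖W - W'‖ = ‖W' - W‖ := norm_sub_rev _ _
    rcases eq_or_lt_of_le (norm_nonneg (Phi W' - Phi W)) with h0 | h0
    · rw [← h0]; positivity
    · rw [hnormWW] at h2
      rw [div_mul_eq_mul_div, le_div_iff₀ hα, ← mul_le_mul_iff_of_pos_right h0]
      nlinarith [h1, h2, h3]
  -- the reduced functional g
  set g : EuclideanSpace ℝ (Fin n) → ℝ :=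
    fun W => (1 / 2 : ℝ) * ⟪A (Phi W), Phi W⟫ - ⟪F, Phi W⟫ + ⟪W, B (Phi W)⟫ with hgdef
  have hHG : ∀ W, h W = -g W + ⟪G, W⟫ + (1 / 2 : ℝ) * ⟪C W, W⟫ := by
    intro W
    have e : ⟪B (Phi W) - G, W⟫ = ⟪W, B (Phi W)⟫ - ⟪G, W⟫ := by
      rw [inner_sub_left, real_inner_comm]
    rw [hdual W]
    simp only [Lag, e, hgdef]
    ring
  have key : ∀ W W', g W ≤ g W' + ⟪W - W', B (Phi W')⟫ := by
    intro W W'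
    have H := (hPhi W).2 (Phi W') (hPhi W').1
    rw [hadj, hadj] at H
    have e2 : ⟪W - W', B (Phi W')⟫ = ⟪W, B (Phi W')⟫ - ⟪W', B (Phi W')⟫ :=
      inner_sub_left _ _ _
    simp only [hgdef]
    rw [e2]; linarith
  clear_value g
  -- quadratic bound on the remainder
  have hbound : ∀ W W' : EuclideanSpace ℝ (Fin n),
      |h W' - h W - ⟪-B (Phi W) + C W + G, W' - W⟫|
        ≤ (‖B‖ * (‖B‖ / α) + ‖C‖ / 2) * ‖W' - W‖ ^ 2 := by
    intro W W'
    have k1 := key W' W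
    have k2 := key W W'
    have hWW' : W - W' = -(W' - W) := by abel
    rw [hWW', inner_neg_left] at k2
    have d1 : ⟪W' - W, B (Phi W')⟫ - ⟪W' - W, B (Phi W)⟫
        = ⟪W' - W, B (Phi W' - Phi W)⟫ := by
      rw [map_sub, inner_sub_right]
    have d2 : |⟪W' - W, B (Phi W' - Phi W)⟫| ≤ ‖B‖ * (‖B‖ / α) * ‖W' - W‖ ^ 2 := by
      have c1 := abs_real_inner_le_norm (W' - W) (B (Phi W' - Phi W))
      have c2 := B.le_opNorm (Phi W' - Phi W)
      have c3 := hLip W W'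
      calc |⟪W' - W, B (Phi W' - Phi W)⟫| ≤ ‖W' - W‖ * ‖B (Phi W' - Phi W)‖ := c1
        _ ≤ ‖W' - W‖ * (‖B‖ * ‖Phi W' - Phi W‖) :=
            mul_le_mul_of_nonneg_left c2 (norm_nonneg _)
        _ ≤ ‖W' - W‖ * (‖B‖ * (‖B‖ / α * ‖W' - W‖)) :=
            mul_le_mul_of_nonneg_left
              (mul_le_mul_of_nonneg_left c3 (norm_nonneg _)) (norm_nonneg _)
        _ = ‖B‖ * (‖B‖ / α) * ‖W' - W‖ ^ 2 := by ring
    have d2' := abs_le.mp d2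
    have hq : ⟪C W', W'⟫ = ⟪C W, W⟫ + 2 * ⟪C W, W' - W⟫ + ⟪C (W' - W), W' - W⟫ := by
      have := aux_quad_expand C hCsym W (W' - W)
      rwa [add_sub_cancel] at this
    have hCu1 : 0 ≤ ⟪C (W' - W), W' - W⟫ := hC0 _
    have hCu2 : ⟪C (W' - W), W' - W⟫ ≤ ‖C‖ * ‖W' - W‖ ^ 2 := by
      calc ⟪C (W' - W), W' - W⟫ ≤ ‖C (W' - W)‖ * ‖W' - W‖ := real_inner_le_norm _ _
        _ ≤ ‖C‖ * ‖W' - W‖ * ‖W' - W‖ :=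
            mul_le_mul_of_nonneg_right (C.le_opNorm _) (norm_nonneg _)
        _ = ‖C‖ * ‖W' - W‖ ^ 2 := by ring
    have hg2 : ⟪-B (Phi W) + C W + G, W' - W⟫
        = -⟪W' - W, B (Phi W)⟫ + ⟪C W, W' - W⟫ + ⟪G, W' - W⟫ := by
      rw [inner_add_left, inner_add_left, inner_neg_left,
        real_inner_comm (B (Phi W)) (W' - W)]
    have hhW := hHG W
    have hhW' := hHG W'
    have hGe : ⟪G, W' - W⟫ = ⟪G, W'⟫ - ⟪G, W⟫ := inner_sub_right _ _ _
    rw [abs_le]; constructor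
    · linarith [k2, d1, d2'.1, d2'.2, hCu1, hCu2, hq, hg2, hhW, hhW', hGe]
    · linarith [k1, k2, d1, d2'.1, d2'.2, hCu1, hCu2, hq, hg2, hhW, hhW', hGe]
  have hgrad : ∀ W, HasGradientAt h (-B (Phi W) + C W + G) W := by
    intro W
    rw [hasGradientAt_iff_isLittleO, Asymptotics.isLittleO_iff]
    intro c hc
    have hM0 : 0 ≤ ‖B‖ * (‖B‖ / α) + ‖C‖ / 2 :=
      add_nonneg (mul_nonneg (norm_nonneg _) (div_nonneg (norm_nonneg _) hα.le))
        (by positivity)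
    have hMc : 0 < c / (‖B‖ * (‖B‖ / α) + ‖C‖ / 2 + 1) := div_pos hc (by linarith)
    filter_upwards [Metric.ball_mem_nhds W hMc] with W' hW'
    rw [Metric.mem_ball, dist_eq_norm] at hW'
    have hb := hbound W W'
    have h5 : ‖W' - W‖ * (‖B‖ * (‖B‖ / α) + ‖C‖ / 2 + 1) ≤ c := by
      rw [← div_mul_cancel₀ c (show (‖B‖ * (‖B‖ / α) + ‖C‖ / 2 + 1) ≠ 0 by positivity)]
      exact mul_le_mul_of_nonneg_right hW'.le (by linarith)
    have h6 : (‖B‖ * (‖B‖ / α) + ‖C‖ / 2) * ‖W' - W‖ ≤ c := by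
      nlinarith [h5, norm_nonneg (W' - W)]
    rw [Real.norm_eq_abs]
    nlinarith [hb, mul_le_mul_of_nonneg_right h6 (norm_nonneg (W' - W)),
      norm_nonneg (W' - W)]
  have hPhiCont : Continuous Phi := by
    have hlw : LipschitzWith (Real.toNNReal (‖B‖ / α)) Phi := by
      apply LipschitzWith.of_dist_le_mul
      intro x y
      rw [dist_eq_norm, dist_eq_norm]
      calc ‖Phi x - Phi y‖ ≤ ‖B‖ / α * ‖x - y‖ := hLip y x
        _ ≤ Real.toNNReal (‖B‖ / α) * ‖x - y‖ :=
          mul_le_mul_of_nonneg_right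
            (le_of_eq (Real.coe_toNNReal _ (div_nonneg (norm_nonneg _) hα.le)).symm)
            (norm_nonneg _)
    exact hlw.continuous
  have hgradcont : Continuous fun W => -B (Phi W) + C W + G :=
    ((B.continuous.comp hPhiCont).neg.add C.continuous).add continuous_const
  refine ⟨?_, ?_, fun W => (hgrad W).gradient⟩
  · -- convexity
    refine ⟨convex_univ, ?_⟩
    intro x _ y _ a b ha hb hab
    set z := a • x + b • y with hz
    have k1 := key x z
    have k2 := key y z
    have hzinner : a * ⟪x - z, B (Phi z)⟫ + b * ⟪y - z, B (Phi z)⟫ = 0 := by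
      rw [inner_sub_left, inner_sub_left, hz, inner_add_left,
        real_inner_smul_left, real_inner_smul_left]
      linear_combination (-(a * ⟪x, B (Phi z)⟫ + b * ⟪y, B (Phi z)⟫)) * hab
    have hgz : a * g x + b * g y ≤ g z := by
      have m1 := mul_le_mul_of_nonneg_left k1 ha
      have m2 := mul_le_mul_of_nonneg_left k2 hb
      calc a * g x + b * g y
          ≤ a * (g z + ⟪x - z, B (Phi z)⟫) + b * (g z + ⟪y - z, B (Phi z)⟫) := by
            linarith
        _ = (a + b) * g z + (a * ⟪x - z, B (Phi z)⟫ + b * ⟪y - z, B (Phi z)⟫) := by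
            ring
        _ = g z := by rw [hab, hzinner]; ring
    have e1 : ⟪C z, z⟫ = a ^ 2 * ⟪C x, x⟫ + 2 * (a * b) * ⟪C x, y⟫ + b ^ 2 * ⟪C y, y⟫ := by
      have hexp := aux_quad_expand C hCsym (a • x) (b • y)
      simp only [map_smul, real_inner_smul_left, real_inner_smul_right] at hexp
      rw [hz, hexp]; ring
    have e2 : ⟪C (x - y), x - y⟫ = ⟪C x, x⟫ - 2 * ⟪C x, y⟫ + ⟪C y, y⟫ := by
      have hexp := aux_quad_expand C hCsym x (-y)
      simp only [map_neg, inner_neg_left, inner_neg_right, neg_neg] at hexp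
      rw [← sub_eq_add_neg] at hexp
      rw [hexp]; ring
    have hCq : a * ⟪C x, x⟫ + b * ⟪C y, y⟫ - ⟪C z, z⟫ = a * b * ⟪C (x - y), x - y⟫ := by
      rw [e1, e2]
      linear_combination (-(a * ⟪C x, x⟫ + b * ⟪C y, y⟫)) * hab
    have hGz : ⟪G, z⟫ = a * ⟪G, x⟫ + b * ⟪G, y⟫ := by
      rw [hz, inner_add_right, real_inner_smul_right, real_inner_smul_right]
    have hCxy := mul_nonneg (mul_nonneg ha hb) (hC0 (x - y))
    clear_value z
    simp only [hHG, smul_eq_mul]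
    linarith [hgz, hCq, hGz, hCxy]
  · -- C¹
    rw [contDiff_one_iff_fderiv]
    refine ⟨fun W => (hgrad W).differentiableAt, ?_⟩
    have hfd : (fderiv ℝ h)
        = fun W => (InnerProductSpace.toDual ℝ (EuclideanSpace ℝ (Fin n)))
            (-B (Phi W) + C W + G) := by
      funext W
      exact ((hasGradientAt_iff_hasFDerivAt.mp (hgrad W)).fderiv)
    rw [hfd]
    exact (InnerProductSpace.toDual ℝ (EuclideanSpace ℝ (Fin n))).continuous.comp hgradcont
end

section
/- The dual functional h is strongly convex with modulus μ, where μ > 0 is the smallest eigenvalue of C: the function W ↦ h(W) − (μ/2)‖W‖² is convex on ℝ^n. In particular, h has a unique global minimizer. -/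
open scoped RealInnerProductSpace

/-- The dual functional `h(W) = −inf_{V ∈ K} L(V, W)`. -/
noncomputable def dualFunctional {m n : ℕ}
    (A : EuclideanSpace ℝ (Fin m) →L[ℝ] EuclideanSpace ℝ (Fin m))
    (B : EuclideanSpace ℝ (Fin m) →L[ℝ] EuclideanSpace ℝ (Fin n))
    (C : EuclideanSpace ℝ (Fin n) →L[ℝ] EuclideanSpace ℝ (Fin n))
    (F : EuclideanSpace ℝ (Fin m)) (G : EuclideanSpace ℝ (Fin n))
    (K : Set (EuclideanSpace ℝ (Fin m)))
    (W : EuclideanSpace ℝ (Fin n)) : ℝ :=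
  -sInf ((fun V => Lag A B C F G V W) '' K)

lemma quad_combo {n : ℕ} (C : EuclideanSpace ℝ (Fin n) →L[ℝ] EuclideanSpace ℝ (Fin n))
    (hCsym : ∀ x y : EuclideanSpace ℝ (Fin n), ⟪C x, y⟫ = ⟪x, C y⟫)
    (x y : EuclideanSpace ℝ (Fin n)) (a b : ℝ) (hab : a + b = 1) :
    ⟪C (a • x + b • y), a • x + b • y⟫ =
      a * ⟪C x, x⟫ + b * ⟪C y, y⟫ - a * b * ⟪C (x - y), x - y⟫ := by
  have hr : ⟪C y, x⟫ = ⟪C x, y⟫ := by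
    rw [hCsym y x, real_inner_comm]
  have hb : b = 1 - a := by linarith
  subst hb
  simp only [map_add, map_smul, map_sub, inner_add_left, inner_add_right,
    inner_smul_left, inner_smul_right, inner_sub_left, inner_sub_right, conj_trivial]
  ring_nf

lemma norm_combo {n : ℕ} (x y : EuclideanSpace ℝ (Fin n)) (a b : ℝ) (hab : a + b = 1) :
    ‖a • x + b • y‖ ^ 2 = a * ‖x‖ ^ 2 + b * ‖y‖ ^ 2 - a * b * ‖x - y‖ ^ 2 := by
  have h := quad_combo (ContinuousLinearMap.id ℝ (EuclideanSpace ℝ (Fin n)))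
    (fun x y => rfl) x y a b hab
  simp only [ContinuousLinearMap.id_apply] at h
  rw [real_inner_self_eq_norm_sq, real_inner_self_eq_norm_sq, real_inner_self_eq_norm_sq,
    real_inner_self_eq_norm_sq] at h
  exact h

lemma exists_alpha {m : ℕ} (hm : 0 < m)
    (A : EuclideanSpace ℝ (Fin m) →L[ℝ] EuclideanSpace ℝ (Fin m))
    (hApos : ∀ x : EuclideanSpace ℝ (Fin m), x ≠ 0 → 0 < ⟪A x, x⟫) :
    ∃ α > 0, ∀ x : EuclideanSpace ℝ (Fin m), α * ‖x‖ ^ 2 ≤ ⟪A x, x⟫ := by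
  haveI : Nontrivial (EuclideanSpace ℝ (Fin m)) :=
    ⟨⟨EuclideanSpace.single ⟨0, hm⟩ 1, 0, by
      intro h
      have := congrArg (fun v : EuclideanSpace ℝ (Fin m) => v ⟨0, hm⟩) h
      simp [EuclideanSpace.single_apply] at this⟩⟩
  have hne : (Metric.sphere (0 : EuclideanSpace ℝ (Fin m)) 1).Nonempty := by
    obtain ⟨x, hx⟩ := exists_norm_eq (EuclideanSpace ℝ (Fin m)) (zero_le_one)
    exact ⟨x, by simpa using hx⟩
  have hcont : Continuous fun x : EuclideanSpace ℝ (Fin m) => ⟪A x, x⟫ :=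
    A.continuous.inner continuous_id
  obtain ⟨x₀, hx₀s, hx₀min⟩ :=
    (isCompact_sphere (0 : EuclideanSpace ℝ (Fin m)) 1).exists_isMinOn hne hcont.continuousOn
  have hx₀norm : ‖x₀‖ = 1 := by simpa using hx₀s
  have hx₀ne : x₀ ≠ 0 := by intro h; rw [h] at hx₀norm; simp at hx₀norm
  refine ⟨⟪A x₀, x₀⟫, hApos x₀ hx₀ne, fun x => ?_⟩
  rcases eq_or_ne x 0 with rfl | hx
  · simp
  · have hnx : ‖x‖ ≠ 0 := norm_ne_zero_iff.mpr hx
    set u : EuclideanSpace ℝ (Fin m) := ‖x‖⁻¹ • x with hu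
    have hus : u ∈ Metric.sphere (0 : EuclideanSpace ℝ (Fin m)) 1 := by
      simp [hu, norm_smul, abs_of_nonneg (norm_nonneg x), inv_mul_cancel₀ hnx]
    have : ⟪A x₀, x₀⟫ ≤ ⟪A u, u⟫ := hx₀min hus
    have hexp : ⟪A u, u⟫ = ‖x‖⁻¹ * ‖x‖⁻¹ * ⟪A x, x⟫ := by
      simp [hu, map_smul, inner_smul_left, inner_smul_right, conj_trivial]; ring
    rw [hexp] at this
    have h2 : ⟪A x₀, x₀⟫ * ‖x‖ ^ 2 ≤ ‖x‖⁻¹ * ‖x‖⁻¹ * ⟪A x, x⟫ * ‖x‖ ^ 2 := by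
      have := sq_nonneg ‖x‖
      nlinarith
    calc ⟪A x₀, x₀⟫ * ‖x‖ ^ 2 ≤ ‖x‖⁻¹ * ‖x‖⁻¹ * ⟪A x, x⟫ * ‖x‖ ^ 2 := h2
      _ = (‖x‖⁻¹ * ‖x‖) * (‖x‖⁻¹ * ‖x‖) * ⟪A x, x⟫ := by rw [sq]; ring
      _ = ⟪A x, x⟫ := by rw [inv_mul_cancel₀ hnx]; ring

lemma key_quad (α c t : ℝ) (hα : 0 < α) : -(c^2/(2*α)) ≤ α/2*t^2 - c*t := by
  have h1 : (α*t - c)^2 / (2*α) = α/2*t^2 - c*t + c^2/(2*α) := by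
    field_simp; ring
  have h2 := div_nonneg (sq_nonneg (α*t - c)) (by linarith : (0:ℝ) ≤ 2*α)
  linarith

lemma key_quad2 (μ c t : ℝ) (hμ : 0 < μ) : c*t ≤ μ/4*t^2 + c^2/μ := by
  have h1 : (μ*t/2 - c)^2 / μ = μ/4*t^2 - c*t + c^2/μ := by
    field_simp; ring
  have h2 := div_nonneg (sq_nonneg (μ*t/2 - c)) hμ.le
  linarith


section Main
variable {m n : ℕ}
  (A : EuclideanSpace ℝ (Fin m) →L[ℝ] EuclideanSpace ℝ (Fin m))
  (B : EuclideanSpace ℝ (Fin m) →L[ℝ] EuclideanSpace ℝ (Fin n))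
  (C : EuclideanSpace ℝ (Fin n) →L[ℝ] EuclideanSpace ℝ (Fin n))
  (F : EuclideanSpace ℝ (Fin m)) (G : EuclideanSpace ℝ (Fin n))
  (K : Set (EuclideanSpace ℝ (Fin m)))

lemma bddBelow_lag {α : ℝ} (hα : 0 < α)
    (hA2 : ∀ x : EuclideanSpace ℝ (Fin m), α * ‖x‖ ^ 2 ≤ ⟪A x, x⟫)
    (W : EuclideanSpace ℝ (Fin n)) :
    BddBelow ((fun V => Lag A B C F G V W) '' K) := by
  refine ⟨-((‖F‖ + ‖B‖ * ‖W‖)^2/(2*α)) - ‖G‖*‖W‖ - (1/2)*⟪C W, W⟫, ?_⟩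
  rintro r ⟨V, hV, rfl⟩
  simp only [Lag]
  have hA := hA2 V
  have hF : ⟪F, V⟫ ≤ ‖F‖ * ‖V‖ := real_inner_le_norm F V
  have hi : -(‖B V - G‖ * ‖W‖) ≤ ⟪B V - G, W⟫ := by
    have h := abs_real_inner_le_norm (B V - G) W
    have := neg_abs_le (⟪B V - G, W⟫ : ℝ)
    linarith
  have hn : ‖B V - G‖ ≤ ‖B‖*‖V‖ + ‖G‖ :=
    (norm_sub_le _ _).trans (add_le_add_left (B.le_opNorm V) _)
  have hi' : -((‖B‖*‖V‖ + ‖G‖) * ‖W‖) ≤ ⟪B V - G, W⟫ := by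
    have := mul_le_mul_of_nonneg_right hn (norm_nonneg W)
    linarith
  have hq := key_quad α (‖F‖ + ‖B‖ * ‖W‖) ‖V‖ hα
  nlinarith

lemma lag_core (hCsym : ∀ x y : EuclideanSpace ℝ (Fin n), ⟪C x, y⟫ = ⟪x, C y⟫)
    {μ : ℝ} (hμ : 0 < μ)
    (hCcoer : ∀ W : EuclideanSpace ℝ (Fin n), μ * ‖W‖ ^ 2 ≤ ⟪C W, W⟫)
    (V : EuclideanSpace ℝ (Fin m)) (x y : EuclideanSpace ℝ (Fin n))
    (a b : ℝ) (ha : 0 ≤ a) (hb : 0 ≤ b) (hab : a + b = 1) :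
    a * Lag A B C F G V x + b * Lag A B C F G V y + μ/2*(a*b*‖x-y‖^2)
      ≤ Lag A B C F G V (a • x + b • y) := by
  have hb' : b = 1 - a := by linarith
  subst hb'
  have hCz := quad_combo C hCsym x y a (1-a) hab
  have hBz : ⟪B V - G, a • x + (1-a) • y⟫ = a * ⟪B V - G, x⟫ + (1-a) * ⟪B V - G, y⟫ := by
    rw [inner_add_right, real_inner_smul_right, real_inner_smul_right]
  have hab0 : 0 ≤ a * (1-a) := mul_nonneg ha hb
  have hC := mul_le_mul_of_nonneg_left (hCcoer (x - y)) hab0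
  simp only [Lag]
  rw [hCz, hBz]
  nlinarith [hC]

end Main

/-- The dual functional `h` is strongly convex with modulus `μ`,
the smallest eigenvalue of `C` (i.e. `W ↦ h(W) − (μ/2)‖W‖²` is convex);
in particular `h` has a unique global minimizer. -/
theorem stmt_5 {m n : ℕ} (hm : 0 < m) (hn : 0 < n)
    (A : EuclideanSpace ℝ (Fin m) →L[ℝ] EuclideanSpace ℝ (Fin m))
    (hAsym : ∀ x y : EuclideanSpace ℝ (Fin m), ⟪A x, y⟫ = ⟪x, A y⟫)
    (hApos : ∀ x : EuclideanSpace ℝ (Fin m), x ≠ 0 → 0 < ⟪A x, x⟫)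
    (B : EuclideanSpace ℝ (Fin m) →L[ℝ] EuclideanSpace ℝ (Fin n))
    (C : EuclideanSpace ℝ (Fin n) →L[ℝ] EuclideanSpace ℝ (Fin n))
    (hCsym : ∀ x y : EuclideanSpace ℝ (Fin n), ⟪C x, y⟫ = ⟪x, C y⟫)
    (μ : ℝ) (hμ : 0 < μ)
    (hCcoer : ∀ W : EuclideanSpace ℝ (Fin n), μ * ‖W‖ ^ 2 ≤ ⟪C W, W⟫)
    (F : EuclideanSpace ℝ (Fin m)) (G : EuclideanSpace ℝ (Fin n))
    (K : Set (EuclideanSpace ℝ (Fin m)))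
    (hKne : K.Nonempty) (hKcl : IsClosed K) (hKco : Convex ℝ K) :
    ConvexOn ℝ Set.univ
        (fun W : EuclideanSpace ℝ (Fin n) =>
          dualFunctional A B C F G K W - μ / 2 * ‖W‖ ^ 2) ∧
      ∃! Θ : EuclideanSpace ℝ (Fin n),
        ∀ W : EuclideanSpace ℝ (Fin n),
          dualFunctional A B C F G K Θ ≤ dualFunctional A B C F G K W := by
  obtain ⟨α, hα, hA2⟩ := exists_alpha hm A hApos
  have hbdd : ∀ W, BddBelow ((fun V => Lag A B C F G V W) '' K) :=
    fun W => bddBelow_lag A B C F G K hα hA2 W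
  have hne : ∀ W : EuclideanSpace ℝ (Fin n),
      ((fun V => Lag A B C F G V W) '' K).Nonempty := fun W => hKne.image _
  -- strong convexity
  have hconv : ConvexOn ℝ Set.univ
      (fun W : EuclideanSpace ℝ (Fin n) =>
        dualFunctional A B C F G K W - μ / 2 * ‖W‖ ^ 2) := by
    refine ⟨convex_univ, ?_⟩
    intro x _ y _ a b ha hb hab
    simp only [smul_eq_mul, dualFunctional]
    have key : a * sInf ((fun V => Lag A B C F G V x) '' K)
        + b * sInf ((fun V => Lag A B C F G V y) '' K)
        + μ/2*(a*b*‖x-y‖^2)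
        ≤ sInf ((fun V => Lag A B C F G V (a • x + b • y)) '' K) := by
      apply le_csInf (hne _)
      rintro r ⟨V, hV, rfl⟩
      have h1 : sInf ((fun V => Lag A B C F G V x) '' K) ≤ Lag A B C F G V x :=
        csInf_le (hbdd x) ⟨V, hV, rfl⟩
      have h2 : sInf ((fun V => Lag A B C F G V y) '' K) ≤ Lag A B C F G V y :=
        csInf_le (hbdd y) ⟨V, hV, rfl⟩
      have hcore := lag_core A B C F G hCsym hμ hCcoer V x y a b ha hb hab
      have ha1 := mul_le_mul_of_nonneg_left h1 ha
      have hb1 := mul_le_mul_of_nonneg_left h2 hb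
      simp only
      linarith
    have hnc := norm_combo x y a b hab
    rw [hnc]
    nlinarith [key]
  refine ⟨hconv, ?_⟩
  -- h is convex
  have hqconv : ConvexOn ℝ Set.univ
      (fun W : EuclideanSpace ℝ (Fin n) => μ / 2 * ‖W‖ ^ 2) := by
    refine ⟨convex_univ, ?_⟩
    intro x _ y _ a b ha hb hab
    simp only [smul_eq_mul]
    rw [norm_combo x y a b hab]
    nlinarith [mul_nonneg (mul_nonneg ha hb) (sq_nonneg ‖x - y‖), hμ.le]
  have hH : ConvexOn ℝ Set.univ (dualFunctional A B C F G K) := by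
    have heq : dualFunctional A B C F G K =
        fun W => (dualFunctional A B C F G K W - μ / 2 * ‖W‖ ^ 2) + μ / 2 * ‖W‖ ^ 2 := by
      funext W; ring
    rw [heq]
    exact hconv.add hqconv
  have hcont : Continuous (dualFunctional A B C F G K) :=
    hH.locallyLipschitz.continuous
  -- coercivity
  obtain ⟨V₀, hV₀⟩ := hKne
  have hlow : ∀ W : EuclideanSpace ℝ (Fin n),
      μ/4*‖W‖^2 - (‖B V₀ - G‖^2/μ + ((1/2:ℝ) * ⟪A V₀, V₀⟫ - ⟪F, V₀⟫))
        ≤ dualFunctional A B C F G K W := by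
    intro W
    have h1 : sInf ((fun V => Lag A B C F G V W) '' K) ≤ Lag A B C F G V₀ W :=
      csInf_le (hbdd W) ⟨V₀, hV₀, rfl⟩
    have h2 : ⟪B V₀ - G, W⟫ ≤ ‖B V₀ - G‖ * ‖W‖ := real_inner_le_norm _ _
    have h3 := hCcoer W
    have h4 := key_quad2 μ ‖B V₀ - G‖ ‖W‖ hμ
    simp only [dualFunctional]
    have hLag : Lag A B C F G V₀ W = (1 / 2 : ℝ) * ⟪A V₀, V₀⟫ - ⟪F, V₀⟫
        + ⟪B V₀ - G, W⟫ - (1 / 2 : ℝ) * ⟪C W, W⟫ := rfl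
    rw [hLag] at h1
    linarith
  have hcoer : Filter.Tendsto (dualFunctional A B C F G K)
      (Filter.cocompact _) Filter.atTop := by
    have h1 : Filter.Tendsto
        (fun t : ℝ => μ/4*t^2 - (‖B V₀ - G‖^2/μ + ((1/2:ℝ) * ⟪A V₀, V₀⟫ - ⟪F, V₀⟫)))
        Filter.atTop Filter.atTop := by
      apply Filter.tendsto_atTop_add_const_right
      exact (Filter.tendsto_pow_atTop two_ne_zero).const_mul_atTop (by positivity)
    exact Filter.tendsto_atTop_mono hlow (h1.comp tendsto_norm_cocompact_atTop)
  obtain ⟨Θ, hΘ⟩ := hcont.exists_forall_le hcoer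
  refine ⟨Θ, hΘ, fun y hy => ?_⟩
  by_contra hne'
  have h12 : dualFunctional A B C F G K y = dualFunctional A B C F G K Θ :=
    le_antisymm (hy Θ) (hΘ y)
  have hc2 := hconv.2 (Set.mem_univ y) (Set.mem_univ Θ)
    (by norm_num : (0:ℝ) ≤ 1/2) (by norm_num : (0:ℝ) ≤ 1/2) (by norm_num)
  simp only [smul_eq_mul] at hc2
  have hnz := norm_combo y Θ (1/2) (1/2) (by norm_num)
  have hpos : 0 < ‖y - Θ‖^2 :=
    pow_pos (norm_sub_pos_iff.mpr hne') 2
  have hmin := hΘ ((1/2:ℝ) • y + (1/2:ℝ) • Θ)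
  rw [hnz] at hc2
  nlinarith [mul_pos hμ hpos, hc2, hmin, h12]
end
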